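/- For every strongly regular four-valued matrix M, the induced consequence relation lies strictly between that of positive classical logic and classical logic over the connectives ¬, ∧, ∨, →, ⊥: ⊨_{CL⁺} ⊊ ⊨_M ⊊ ⊨_{CL}. Moreover, for every propositional variable p, {p} ⊭_M {¬p} and {¬p} ⊭_M {p}. -/

import Mathlib

namespace BD17

/-- The four truth values of Belnap-Dunn logic:
`t` (true), `f` (false), `b` (both true and false), `n` (neither true nor false). -/
inductive V4 : Type
  | t | f | b | n
deriving DecidableEq, Repr

namespace V4

/-- `a` lies above truth in the Belnap-Dunn bilattice (i.e. `a ∈ {t, b}`). -/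
def hasT : V4 → Bool
  | t => true
  | b => true
  | _ => false

/-- `a` lies above falsity in the Belnap-Dunn bilattice (i.e. `a ∈ {f, b}`). -/
def hasF : V4 → Bool
  | f => true
  | b => true
  | _ => false

def ofTF : Bool → Bool → V4
  | true, true => b
  | true, false => t
  | false, true => f
  | false, false => n

/-- Interpretation of ¬: swaps `t` and `f`, fixes `b` and `n`. -/
def neg4 : V4 → V4
  | t => f
  | f => t
  | b => b
  | n => n

/-- Interpretation of ∧: greatest lower bound in the lattice order on `V4`
with `f` least, `t` greatest, `b` and `n` incomparable. -/
def and4 (x y : V4) : V4 := ofTF (x.hasT && y.hasT) (x.hasF || y.hasF)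

/-- Interpretation of ∨: least upper bound in the lattice order on `V4`
with `f` least, `t` greatest, `b` and `n` incomparable. -/
def or4 (x y : V4) : V4 := ofTF (x.hasT || y.hasT) (x.hasF && y.hasF)

/-- Interpretation of →: `a₁ → a₂ = t` if `a₁ ∉ {t, b}`, and `a₂` otherwise. -/
def imp4 (x y : V4) : V4 := if x = t ∨ x = b then y else t

/-- The designated truth values: `t` and `b`. -/
def desig (x : V4) : Prop := x = t ∨ x = b

end V4

/-- Formulas over the connectives ¬, ∧, ∨, →, ⊥. -/
inductive Fm : Type
  | var : ℕ → Fm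
  | neg : Fm → Fm
  | and : Fm → Fm → Fm
  | or : Fm → Fm → Fm
  | imp : Fm → Fm → Fm
  | bot : Fm
deriving DecidableEq

/-- The valuation, in the four-valued matrix interpreting ¬ by `In`, ∧ by `Ia`,
∨ by `Io`, → by `Ii` and ⊥ by `f`, determined by an assignment of truth values
to the propositional variables. -/
def valM (In : V4 → V4) (Ia Io Ii : V4 → V4 → V4) (v : ℕ → V4) : Fm → V4
  | .var p => v p
  | .neg A => In (valM In Ia Io Ii v A)
  | .and A B => Ia (valM In Ia Io Ii v A) (valM In Ia Io Ii v B)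
  | .or A B => Io (valM In Ia Io Ii v A) (valM In Ia Io Ii v B)
  | .imp A B => Ii (valM In Ia Io Ii v A) (valM In Ia Io Ii v B)
  | .bot => V4.f

/-- The consequence relation induced by the four-valued matrix with truth
functions `In`, `Ia`, `Io`, `Ii` (and `⊥ = f`), designated values `{t, b}`. -/
def ConM (In : V4 → V4) (Ia Io Ii : V4 → V4 → V4) (Γ Δ : Set Fm) : Prop :=
  ∀ v : ℕ → V4, (∀ A ∈ Γ, V4.desig (valM In Ia Io Ii v A)) →
    ∃ B ∈ Δ, V4.desig (valM In Ia Io Ii v B)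

/-- The two-valued Boolean valuation determined by an assignment of Boolean
values to the propositional variables. -/
def valB (v : ℕ → Bool) : Fm → Bool
  | .var p => v p
  | .neg A => !(valB v A)
  | .and A B => valB v A && valB v B
  | .or A B => valB v A || valB v B
  | .imp A B => !(valB v A) || valB v B
  | .bot => false

/-- The consequence relation of classical propositional logic CL over
¬, ∧, ∨, →, ⊥, induced by the two-valued Boolean matrix. -/
def ConCL (Γ Δ : Set Fm) : Prop :=
  ∀ v : ℕ → Bool, (∀ A ∈ Γ, valB v A = true) → ∃ B ∈ Δ, valB v B = true

/-- A valuation of positive classical logic CL⁺ over this language: a Boolean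
valuation that respects ∧, ∨, →, ⊥ but is unconstrained on negated formulas
(¬ obeys no laws in the positive fragment). -/
def IsPosVal (ν : Fm → Bool) : Prop :=
  ν Fm.bot = false ∧
  (∀ A B : Fm, ν (Fm.and A B) = (ν A && ν B)) ∧
  (∀ A B : Fm, ν (Fm.or A B) = (ν A || ν B)) ∧
  (∀ A B : Fm, ν (Fm.imp A B) = (!(ν A) || ν B))

/-- The consequence relation of positive classical logic CL⁺ over
¬, ∧, ∨, →, ⊥. -/
def ConCLp (Γ Δ : Set Fm) : Prop :=
  ∀ ν : Fm → Bool, IsPosVal ν → (∀ A ∈ Γ, ν A = true) → ∃ B ∈ Δ, ν B = true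


instance : DecidablePred V4.desig :=
  fun x => inferInstanceAs (Decidable (x = V4.t ∨ x = V4.b))

/-- Auxiliary: `t` is designated. -/
lemma desig_t : V4.desig V4.t := Or.inl rfl

/-- Auxiliary: `f` is not designated. -/
lemma not_desig_f : ¬ V4.desig V4.f := by rintro (h | h) <;> exact V4.noConfusion h

lemma pick_t (x : BD17.V4) (hc : x = V4.t ∨ x = V4.f) (hd : V4.desig x) : x = V4.t := by
  rcases hc with h | h
  · exact h
  · subst h; exact absurd hd not_desig_f

lemma pick_f (x : BD17.V4) (hc : x = V4.t ∨ x = V4.f) (hd : ¬ V4.desig x) : x = V4.f := by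
  rcases hc with h | h
  · subst h; exact absurd desig_t hd
  · exact h

/-- A positive valuation sending all variables and negations to false. -/
def nuFalse : Fm → Bool
  | .var _ => false
  | .neg _ => false
  | .and A B => nuFalse A && nuFalse B
  | .or A B => nuFalse A || nuFalse B
  | .imp A B => !(nuFalse A) || nuFalse B
  | .bot => false

lemma nuFalse_posVal : IsPosVal nuFalse :=
  ⟨rfl, fun _ _ => rfl, fun _ _ => rfl, fun _ _ => rfl⟩

/-- for every strongly regular four-valued matrix M, the induced
consequence relation lies strictly between that of positive classical logic and
that of classical logic: ⊨_{CL⁺} ⊊ ⊨_M ⊊ ⊨_{CL}; moreover, for every variable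
`p`, `{p} ⊭_M {¬p}` and `{¬p} ⊭_M {p}`. -/
theorem stmt17 (In : V4 → V4) (Ia Io Ii : V4 → V4 → V4)
    -- the designation conditions of a strongly regular four-valued matrix
    (hneg : ∀ a, V4.desig (In a) ↔ (a = V4.f ∨ a = V4.b))
    (hand : ∀ a₁ a₂, V4.desig (Ia a₁ a₂) ↔ (V4.desig a₁ ∧ V4.desig a₂))
    (hor : ∀ a₁ a₂, V4.desig (Io a₁ a₂) ↔ (V4.desig a₁ ∨ V4.desig a₂))
    (himp : ∀ a₁ a₂, V4.desig (Ii a₁ a₂) ↔ (¬ V4.desig a₁ ∨ V4.desig a₂))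
    -- {t, f} is closed under all four non-nullary truth functions
    (hcn : ∀ a, (a = V4.t ∨ a = V4.f) → (In a = V4.t ∨ In a = V4.f))
    (hca : ∀ a₁ a₂, (a₁ = V4.t ∨ a₁ = V4.f) → (a₂ = V4.t ∨ a₂ = V4.f) →
      (Ia a₁ a₂ = V4.t ∨ Ia a₁ a₂ = V4.f))
    (hco : ∀ a₁ a₂, (a₁ = V4.t ∨ a₁ = V4.f) → (a₂ = V4.t ∨ a₂ = V4.f) →
      (Io a₁ a₂ = V4.t ∨ Io a₁ a₂ = V4.f))
    (hci : ∀ a₁ a₂, (a₁ = V4.t ∨ a₁ = V4.f) → (a₂ = V4.t ∨ a₂ = V4.f) →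
      (Ii a₁ a₂ = V4.t ∨ Ii a₁ a₂ = V4.f)) :
    (∀ Γ Δ : Set Fm, ConCLp Γ Δ → ConM In Ia Io Ii Γ Δ) ∧
    (∃ Γ Δ : Set Fm, ConM In Ia Io Ii Γ Δ ∧ ¬ ConCLp Γ Δ) ∧
    (∀ Γ Δ : Set Fm, ConM In Ia Io Ii Γ Δ → ConCL Γ Δ) ∧
    (∃ Γ Δ : Set Fm, ConCL Γ Δ ∧ ¬ ConM In Ia Io Ii Γ Δ) ∧
    (∀ p : ℕ,
      ¬ ConM In Ia Io Ii {Fm.var p} {Fm.neg (Fm.var p)} ∧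
      ¬ ConM In Ia Io Ii {Fm.neg (Fm.var p)} {Fm.var p}) := by
  constructor
  · -- CL⁺ ⊆ M
    intro Γ Δ hCLp v hΓ
    have hres := hCLp (fun A => decide (V4.desig (valM In Ia Io Ii v A)))
      (by
        refine ⟨?_, ?_, ?_, ?_⟩
        · exact decide_eq_false not_desig_f
        · intro A B; simp [valM, hand]
        · intro A B; simp [valM, hor]
        · intro A B; simp [valM, himp])
      (by intro A hA; exact decide_eq_true (hΓ A hA))
    obtain ⟨B, hB, hB'⟩ := hres
    exact ⟨B, hB, of_decide_eq_true hB'⟩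
  refine ⟨⟨∅, {Fm.neg Fm.bot}, ?_, ?_⟩, ?_, ?_, ?_⟩
  · -- ∅ ⊨_M ¬⊥
    intro v _
    refine ⟨Fm.neg Fm.bot, rfl, ?_⟩
    show V4.desig (In (valM In Ia Io Ii v Fm.bot))
    exact (hneg _).mpr (Or.inl rfl)
  · -- but not in CL⁺
    intro h
    obtain ⟨B, hB, hB'⟩ := h nuFalse nuFalse_posVal (by intro A hA; cases hA)
    rcases hB with rfl
    simp [nuFalse] at hB'
  · -- M ⊆ CL
    intro Γ Δ hM v hΓ
    set v4 : ℕ → V4 := fun p => if v p then V4.t else V4.f with hv4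
    have key : ∀ A : Fm, valM In Ia Io Ii v4 A = (if valB v A then V4.t else V4.f) := by
      intro A
      induction A with
      | var p => by_cases h : v p <;> simp [valM, valB, hv4, h]
      | bot => simp [valM, valB]
      | neg A ih =>
        show In (valM In Ia Io Ii v4 A) = _
        rw [ih]
        cases hb : valB v A <;> simp only [valB, hb, if_true, if_false, Bool.not_false,
          Bool.not_true]
        · exact pick_t _ (hcn _ (Or.inr rfl)) ((hneg _).mpr (Or.inl rfl))
        · refine pick_f _ (hcn _ (Or.inl rfl)) ?_
          rw [hneg]; rintro (h | h) <;> exact V4.noConfusion h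
      | and A B ihA ihB =>
        show Ia (valM In Ia Io Ii v4 A) (valM In Ia Io Ii v4 B) = _
        rw [ihA, ihB]
        cases ha : valB v A <;> cases hb : valB v B <;>
          simp only [valB, ha, hb, if_true, if_false, Bool.and_self, Bool.and_true,
            Bool.and_false, Bool.true_and, Bool.false_and]
        · exact pick_f _ (hca _ _ (Or.inr rfl) (Or.inr rfl))
            (fun h => absurd ((hand _ _).mp h).1 not_desig_f)
        · exact pick_f _ (hca _ _ (Or.inr rfl) (Or.inl rfl))
            (fun h => absurd ((hand _ _).mp h).1 not_desig_f)
        · exact pick_f _ (hca _ _ (Or.inl rfl) (Or.inr rfl))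
            (fun h => absurd ((hand _ _).mp h).2 not_desig_f)
        · exact pick_t _ (hca _ _ (Or.inl rfl) (Or.inl rfl))
            ((hand _ _).mpr ⟨desig_t, desig_t⟩)
      | or A B ihA ihB =>
        show Io (valM In Ia Io Ii v4 A) (valM In Ia Io Ii v4 B) = _
        rw [ihA, ihB]
        cases ha : valB v A <;> cases hb : valB v B <;>
          simp only [valB, ha, hb, if_true, if_false, Bool.or_self, Bool.or_true,
            Bool.or_false, Bool.true_or, Bool.false_or]
        · refine pick_f _ (hco _ _ (Or.inr rfl) (Or.inr rfl)) ?_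
          intro h
          rcases (hor _ _).mp h with h | h <;> exact not_desig_f h
        · exact pick_t _ (hco _ _ (Or.inr rfl) (Or.inl rfl))
            ((hor _ _).mpr (Or.inr desig_t))
        · exact pick_t _ (hco _ _ (Or.inl rfl) (Or.inr rfl))
            ((hor _ _).mpr (Or.inl desig_t))
        · exact pick_t _ (hco _ _ (Or.inl rfl) (Or.inl rfl))
            ((hor _ _).mpr (Or.inl desig_t))
      | imp A B ihA ihB =>
        show Ii (valM In Ia Io Ii v4 A) (valM In Ia Io Ii v4 B) = _
        rw [ihA, ihB]
        cases ha : valB v A <;> cases hb : valB v B <;>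
          simp only [valB, ha, hb, if_true, if_false, Bool.not_true, Bool.not_false,
            Bool.or_self, Bool.or_true, Bool.or_false, Bool.true_or, Bool.false_or]
        · exact pick_t _ (hci _ _ (Or.inr rfl) (Or.inr rfl))
            ((himp _ _).mpr (Or.inl not_desig_f))
        · exact pick_t _ (hci _ _ (Or.inr rfl) (Or.inl rfl))
            ((himp _ _).mpr (Or.inl not_desig_f))
        · refine pick_f _ (hci _ _ (Or.inl rfl) (Or.inr rfl)) ?_
          intro h
          rcases (himp _ _).mp h with h | h
          · exact h desig_t
          · exact not_desig_f h
        · exact pick_t _ (hci _ _ (Or.inl rfl) (Or.inl rfl))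
            ((himp _ _).mpr (Or.inr desig_t))
    obtain ⟨B, hB, hB'⟩ := hM v4 (by
      intro A hA
      rw [key A, hΓ A hA]
      exact desig_t)
    refine ⟨B, hB, ?_⟩
    rw [key B] at hB'
    cases hb : valB v B
    · rw [hb] at hB'; exact absurd hB' not_desig_f
    · rfl
  · -- CL-valid but not M-valid
    refine ⟨{Fm.and (Fm.var 0) (Fm.neg (Fm.var 0))}, ∅, ?_, ?_⟩
    · intro v hΓ
      have := hΓ _ rfl
      simp [valB] at this
    · intro h
      obtain ⟨B, hB, _⟩ := h (fun _ => V4.b) (by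
        intro A hA
        rcases hA with rfl
        show V4.desig (Ia (valM In Ia Io Ii _ (Fm.var 0)) (In (valM In Ia Io Ii _ (Fm.var 0))))
        exact (hand _ _).mpr ⟨Or.inr rfl, (hneg _).mpr (Or.inr rfl)⟩)
      cases hB
  · -- p ⊭ ¬p and ¬p ⊭ p
    intro p
    constructor
    · intro h
      obtain ⟨B, hB, hB'⟩ := h (fun _ => V4.t) (by
        intro A hA; rcases hA with rfl; exact desig_t)
      rcases hB with rfl
      have : V4.desig (In (valM In Ia Io Ii (fun _ => V4.t) (Fm.var p))) := hB'
      rcases (hneg _).mp this with h | h <;> exact V4.noConfusion h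
    · intro h
      obtain ⟨B, hB, hB'⟩ := h (fun _ => V4.f) (by
        intro A hA
        rcases hA with rfl
        show V4.desig (In (valM In Ia Io Ii _ (Fm.var p)))
        exact (hneg _).mpr (Or.inl rfl))
      rcases hB with rfl
      exact absurd hB' not_desig_f


end BD17
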